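/- Let $\alpha \geq \beta > 0$, $\eta = \alpha\beta$, $\sigma > 0$. Then $\int (x \mid \alpha - \beta)_n \, \mu_{\alpha,\beta,\sigma}(dx) = \beta^n (\sigma/\eta)^{(n)}$ for all $n \geq 0$. -/

import Mathlib

open MeasureTheory

/-- The orthogonality measure `μ_{α,β,σ}`: the gamma distribution when `α = β`, and the
negative binomial (Pascal) distribution on `(α-β)ℕ₀` when `α ≠ β`. Here `η = αβ`. -/
noncomputable def muM (α β σ : ℝ) : Measure ℝ :=
  if α = β then
    volume.withDensity fun x =>
      ENNReal.ofReal (if 0 < x then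
        (Real.Gamma (σ / (α * β)))⁻¹ * α ^ (-(σ / (α * β))) * x ^ (σ / (α * β) - 1)
          * Real.exp (-x / α)
      else 0)
  else
    Measure.sum fun m : ℕ =>
      ENNReal.ofReal ((1 - β / α) ^ (σ / (α * β)) * (β / α) ^ m * ((m.factorial : ℝ))⁻¹ *
        ∏ j ∈ Finset.range m, (σ / (α * β) + j)) • Measure.dirac ((α - β) * m)

open ENNReal NNReal


lemma gamma_prod {k : ℝ} (hk : 0 < k) (n : ℕ) :
    Real.Gamma (k + n) = Real.Gamma k * ∏ j ∈ Finset.range n, (k + j) := by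
  induction n with
  | zero => simp
  | succ n ih =>
    have h1 : (k + (n + 1 : ℕ) : ℝ) = (k + n) + 1 := by push_cast; ring
    rw [h1, Real.Gamma_add_one (by positivity : (0:ℝ) < k + n).ne', ih,
      Finset.prod_range_succ]
    ring

lemma key_hasSum {k q : ℝ} (hk : 0 < k) (hq0 : 0 ≤ q) (hq1 : q < 1) :
    HasSum (fun m : ℕ => q ^ m / m.factorial * ∏ j ∈ Finset.range m, (k + j))
      ((1 - q) ^ (-k)) := by
  set r : ℝ := 1 - q with hr_def
  have hr : 0 < r := by simp only [hr_def]; linarith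
  -- Step 1: each term as a lintegral
  have step1 : ∀ m : ℕ, ENNReal.ofReal (q ^ m / m.factorial * Real.Gamma (k + m))
      = ∫⁻ x in Set.Ioi (0:ℝ),
          ENNReal.ofReal (q ^ m / m.factorial * (Real.exp (-x) * x ^ (k + m - 1))) := by
    intro m
    have hkm : (0:ℝ) < k + m := by positivity
    have hnn : (0:ℝ) ≤ q ^ m / m.factorial := by positivity
    have hae : 0 ≤ᵐ[volume.restrict (Set.Ioi (0:ℝ))]
        fun x => Real.exp (-x) * x ^ (k + m - 1) := by
      filter_upwards [ae_restrict_mem measurableSet_Ioi] with x hx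
      exact mul_nonneg (Real.exp_nonneg _) (Real.rpow_nonneg (le_of_lt hx) _)
    rw [Real.Gamma_eq_integral hkm, ENNReal.ofReal_mul hnn,
      ofReal_integral_eq_lintegral_ofReal (Real.GammaIntegral_convergent hkm) hae,
      ← lintegral_const_mul' _ _ ENNReal.ofReal_ne_top]
    simp_rw [← ENNReal.ofReal_mul hnn]
  -- Step 2: main ENNReal computation
  have hmeas : ∀ m : ℕ, AEMeasurable
      (fun x : ℝ => ENNReal.ofReal (q ^ m / m.factorial * (Real.exp (-x) * x ^ (k + m - 1))))
      (volume.restrict (Set.Ioi (0:ℝ))) := by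
    intro m
    refine (ENNReal.measurable_ofReal.comp ?_).aemeasurable
    exact (measurable_const.mul ((Real.measurable_exp.comp measurable_neg).mul
      (measurable_id.pow measurable_const)))
  have hInt : IntegrableOn (fun x : ℝ => x ^ (k - 1) * Real.exp (-(r * x))) (Set.Ioi 0) := by
    have := integrableOn_rpow_mul_exp_neg_mul_rpow (s := k - 1) (p := 1) (b := r)
      (by linarith) zero_lt_one hr
    simp_rw [Real.rpow_one, neg_mul] at this ⊢
    exact this
  have hae2 : 0 ≤ᵐ[volume.restrict (Set.Ioi (0:ℝ))]
      fun x => x ^ (k - 1) * Real.exp (-(r * x)) := by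
    filter_upwards [ae_restrict_mem measurableSet_Ioi] with x hx
    exact mul_nonneg (Real.rpow_nonneg (le_of_lt hx) _) (Real.exp_nonneg _)
  have main : ∑' m : ℕ, ENNReal.ofReal (q ^ m / m.factorial * Real.Gamma (k + m))
      = ENNReal.ofReal ((1 / r) ^ k * Real.Gamma k) := by
    calc ∑' m : ℕ, ENNReal.ofReal (q ^ m / m.factorial * Real.Gamma (k + m))
        = ∑' m : ℕ, ∫⁻ x in Set.Ioi (0:ℝ),
            ENNReal.ofReal (q ^ m / m.factorial * (Real.exp (-x) * x ^ (k + m - 1))) :=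
          tsum_congr step1
      _ = ∫⁻ x in Set.Ioi (0:ℝ), ∑' m : ℕ,
            ENNReal.ofReal (q ^ m / m.factorial * (Real.exp (-x) * x ^ (k + m - 1))) :=
          (lintegral_tsum hmeas).symm
      _ = ∫⁻ x in Set.Ioi (0:ℝ), ENNReal.ofReal (x ^ (k - 1) * Real.exp (-(r * x))) := by
          refine setLIntegral_congr_fun measurableSet_Ioi (fun x hx => ?_)
          have hx0 : (0:ℝ) < x := hx
          have e1 : ∀ m : ℕ, q ^ m / m.factorial * (Real.exp (-x) * x ^ (k + m - 1))
              = (Real.exp (-x) * x ^ (k - 1)) * ((q * x) ^ m / m.factorial) := by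
            intro m
            have hxp : x ^ (k + m - 1) = x ^ (k - 1) * x ^ (m : ℕ) := by
              rw [← Real.rpow_natCast x m, ← Real.rpow_add hx0]
              congr 1
              ring
            rw [hxp, mul_pow]
            ring
          have hsumm : Summable fun m : ℕ =>
              (Real.exp (-x) * x ^ (k - 1)) * ((q * x) ^ m / m.factorial) :=
            (Real.summable_pow_div_factorial (q * x)).mul_left _
          have hnn : ∀ m : ℕ, 0 ≤ (Real.exp (-x) * x ^ (k - 1)) * ((q * x) ^ m / m.factorial) := by
            intro m
            have h1 : (0:ℝ) ≤ x ^ (k - 1) := Real.rpow_nonneg hx0.le _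
            have h2 : (0:ℝ) ≤ (q * x) ^ m := pow_nonneg (mul_nonneg hq0 hx0.le) m
            positivity
          calc ∑' m : ℕ, ENNReal.ofReal (q ^ m / m.factorial * (Real.exp (-x) * x ^ (k + m - 1)))
              = ∑' m : ℕ, ENNReal.ofReal
                  ((Real.exp (-x) * x ^ (k - 1)) * ((q * x) ^ m / m.factorial)) := by
                exact tsum_congr fun m => by rw [e1 m]
            _ = ENNReal.ofReal (∑' m : ℕ,
                  (Real.exp (-x) * x ^ (k - 1)) * ((q * x) ^ m / m.factorial)) :=
                (ENNReal.ofReal_tsum_of_nonneg hnn hsumm).symm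
            _ = ENNReal.ofReal (x ^ (k - 1) * Real.exp (-(r * x))) := by
                rw [_root_.tsum_mul_left (f := fun m : ℕ => (q * x) ^ m / (m.factorial : ℝ))]
                have hexp : ∑' m : ℕ, (q * x) ^ m / (m.factorial : ℝ) = Real.exp (q * x) := by
                  rw [Real.exp_eq_exp_ℝ, NormedSpace.exp_eq_tsum_div]
                rw [hexp]
                congr 1
                rw [mul_comm (Real.exp (-x)) (x ^ (k-1)), mul_assoc, ← Real.exp_add]
                congr 1
                simp only [hr_def]
                ring
      _ = ENNReal.ofReal (∫ x in Set.Ioi (0:ℝ), x ^ (k - 1) * Real.exp (-(r * x))) :=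
          (ofReal_integral_eq_lintegral_ofReal hInt hae2).symm
      _ = ENNReal.ofReal ((1 / r) ^ k * Real.Gamma k) := by
          rw [Real.integral_rpow_mul_exp_neg_mul_Ioi hk hr]
  -- convert back to real numbers
  have hGk : 0 < Real.Gamma k := Real.Gamma_pos_of_pos hk
  set f : ℕ → ℝ := fun m => q ^ m / m.factorial * ∏ j ∈ Finset.range m, (k + j) with hf_def
  have hfnn : ∀ m, 0 ≤ f m := by
    intro m
    have h1 : (0:ℝ) ≤ ∏ j ∈ Finset.range m, (k + j) :=
      Finset.prod_nonneg fun j _ => by positivity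
    have h2 : (0:ℝ) ≤ q ^ m / m.factorial := by positivity
    exact mul_nonneg h2 h1
  have hterm : ∀ m : ℕ, q ^ m / m.factorial * Real.Gamma (k + m) = Real.Gamma k * f m := by
    intro m; rw [gamma_prod hk m, hf_def]; ring
  have hS : (1 / r) ^ k = r ^ (-k) := by
    rw [one_div, Real.inv_rpow hr.le, ← Real.rpow_neg hr.le]
  have main' : ∑' m : ℕ, ENNReal.ofReal (Real.Gamma k * f m)
      = ENNReal.ofReal (Real.Gamma k * r ^ (-k)) := by
    simp_rw [← hterm]
    rw [main, hS, mul_comm]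
  have hsum1 : Summable fun m : ℕ => Real.Gamma k * f m := by
    have h1 : ∑' m : ℕ, ENNReal.ofReal (Real.Gamma k * f m) ≠ ⊤ := by
      rw [main']; exact ENNReal.ofReal_ne_top
    exact (ENNReal.summable_toReal h1).congr fun m =>
      ENNReal.toReal_ofReal (mul_nonneg hGk.le (hfnn m))
  have htsum1 : ∑' m : ℕ, Real.Gamma k * f m = Real.Gamma k * r ^ (-k) := by
    have h2 := ENNReal.ofReal_tsum_of_nonneg (fun m => mul_nonneg hGk.le (hfnn m)) hsum1
    exact (ENNReal.ofReal_eq_ofReal_iff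
      (tsum_nonneg fun m => mul_nonneg hGk.le (hfnn m))
      (mul_nonneg hGk.le (Real.rpow_nonneg hr.le _))).mp (h2.trans main')
  have hsumf : Summable f := (summable_mul_left_iff hGk.ne').mp hsum1
  have htsumf : ∑' m : ℕ, f m = r ^ (-k) := by
    rw [_root_.tsum_mul_left (f := f)] at htsum1
    exact mul_left_cancel₀ hGk.ne' htsum1
  exact htsumf ▸ hsumf.hasSum

lemma prod_desc : ∀ (n l : ℕ), ∏ j ∈ Finset.range n, ((l : ℝ) + n - j)
    = (l + n).factorial / l.factorial := by
  intro n
  induction n with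
  | zero => intro l; simp; rw [div_self (by exact_mod_cast l.factorial_ne_zero : (l.factorial:ℝ) ≠ 0)]
  | succ n ih =>
    intro l
    have h1 : ∏ j ∈ Finset.range n, ((l : ℝ) + (n + 1 : ℕ) - j)
        = ∏ j ∈ Finset.range n, (((l + 1 : ℕ) : ℝ) + n - j) := by
      refine Finset.prod_congr rfl fun j _ => ?_
      push_cast; ring
    have h2 : ((l : ℝ) + (n + 1 : ℕ) - n) = ((l : ℝ) + 1) := by push_cast; ring
    have h3 : l + 1 + n = l + (n + 1) := by ring
    have h4 : ((l+1).factorial : ℝ) = (l+1) * l.factorial := by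
      rw [Nat.factorial_succ]; push_cast; ring
    rw [Finset.prod_range_succ, h1, ih (l + 1), h2, h3, h4]
    have hl : (l.factorial : ℝ) ≠ 0 := Nat.cast_ne_zero.mpr l.factorial_ne_zero
    field_simp

theorem stmt_9 (α β σ : ℝ) (hβ : 0 < β) (hαβ : β ≤ α) (hσ : 0 < σ) (n : ℕ) :
    ∫ x, (∏ j ∈ Finset.range n, (x - j * (α - β))) ∂(muM α β σ) =
      β ^ n * ∏ j ∈ Finset.range n, (σ / (α * β) + j) := by
  by_cases hab : α = β
  · -- Gamma case
    subst hab
    have hα : 0 < α := hβ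
    set k : ℝ := σ / (α * α) with hk_def
    have hk : 0 < k := by rw [hk_def]; positivity
    have hΓ : 0 < Real.Gamma k := Real.Gamma_pos_of_pos hk
    set g : ℝ → ℝ := fun x => if 0 < x then
        (Real.Gamma k)⁻¹ * α ^ (-k) * x ^ (k - 1) * Real.exp (-x / α) else 0 with hg_def
    have hgnn : ∀ x, 0 ≤ g x := by
      intro x
      simp only [hg_def]
      split_ifs with hx
      · have h1 : (0:ℝ) ≤ x ^ (k - 1) := Real.rpow_nonneg hx.le _
        have h2 : (0:ℝ) ≤ α ^ (-k) := Real.rpow_nonneg hα.le _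
        positivity
      · exact le_refl 0
    have hμ : muM α α σ = volume.withDensity fun x => ((g x).toNNReal : ENNReal) := by
      rw [muM, if_pos rfl]
      congr 1
    have hgmeas : Measurable fun x => (g x).toNNReal := by
      refine Measurable.real_toNNReal ?_
      simp only [hg_def]
      refine Measurable.ite measurableSet_Ioi ?_ measurable_const
      exact (measurable_const.mul (measurable_id.pow measurable_const)).mul
        (Real.measurable_exp.comp ((measurable_id.neg).div_const α))
    have hfx : (fun x : ℝ => ∏ j ∈ Finset.range n, (x - (j:ℝ) * (α - α)))
        = fun x : ℝ => x ^ n := by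
      funext x
      simp [sub_self, Finset.prod_const, Finset.card_range]
    rw [hfx, hμ, integral_withDensity_eq_integral_smul hgmeas]
    have hind : (fun x : ℝ => (g x).toNNReal • (x ^ n : ℝ)) = Set.indicator (Set.Ioi 0)
        (fun x => (Real.Gamma k)⁻¹ * α ^ (-k) * x ^ (k - 1) * Real.exp (-x / α) * x ^ n) := by
      funext x
      rw [NNReal.smul_def, Real.coe_toNNReal _ (hgnn x), smul_eq_mul]
      by_cases hx : 0 < x
      · rw [Set.indicator_of_mem (Set.mem_Ioi.mpr hx)]
        simp only [hg_def, if_pos hx]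
      · rw [Set.indicator_of_notMem (fun h => hx (Set.mem_Ioi.mp h))]
        simp only [hg_def, if_neg hx, zero_mul]
    rw [hind, integral_indicator measurableSet_Ioi]
    have hpt : ∀ x ∈ Set.Ioi (0:ℝ),
        (Real.Gamma k)⁻¹ * α ^ (-k) * x ^ (k - 1) * Real.exp (-x / α) * x ^ n
        = ((Real.Gamma k)⁻¹ * α ^ (-k)) * (x ^ ((k + (n:ℝ)) - 1) * Real.exp (-(α⁻¹ * x))) := by
      intro x hx
      have hx0 : (0:ℝ) < x := hx
      have hxp : x ^ ((k + (n:ℝ)) - 1) = x ^ (k - 1) * x ^ (n:ℕ) := by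
        rw [← Real.rpow_natCast x n, ← Real.rpow_add hx0]
        congr 1
        ring
      have hexp : -x / α = -(α⁻¹ * x) := by ring
      rw [hxp, hexp]
      ring
    rw [setIntegral_congr_fun measurableSet_Ioi hpt, integral_const_mul,
      Real.integral_rpow_mul_exp_neg_mul_Ioi (by positivity : (0:ℝ) < k + (n:ℝ))
        (by positivity : (0:ℝ) < α⁻¹),
      one_div, inv_inv, gamma_prod hk n]
    have hαn : α ^ (k + (n:ℝ)) * α ^ (-k) = α ^ (n:ℕ) := by
      rw [← Real.rpow_natCast α n, ← Real.rpow_add hα]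
      congr 1
      ring
    have : (Real.Gamma k)⁻¹ * α ^ (-k) * (α ^ (k + (n:ℝ)) *
        (Real.Gamma k * ∏ j ∈ Finset.range n, (k + (j:ℝ))))
        = ((Real.Gamma k)⁻¹ * Real.Gamma k) * (α ^ (k + (n:ℝ)) * α ^ (-k)) *
          ∏ j ∈ Finset.range n, (k + (j:ℝ)) := by ring
    rw [this, inv_mul_cancel₀ hΓ.ne', hαn, one_mul]
  · -- negative binomial case
    have hba : β < α := lt_of_le_of_ne hαβ fun h => hab h.symm
    have hα : 0 < α := lt_trans hβ hba
    set k : ℝ := σ / (α * β) with hk_def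
    have hk : 0 < k := by rw [hk_def]; positivity
    set d : ℝ := α - β with hd_def
    have hd : 0 < d := by rw [hd_def]; linarith
    set q : ℝ := β / α with hq_def
    have hq0 : 0 < q := by rw [hq_def]; positivity
    have hq1 : q < 1 := by rw [hq_def, div_lt_one hα]; exact hba
    set w : ℕ → ℝ := fun m => (1 - q) ^ k * q ^ m * ((m.factorial : ℝ))⁻¹ *
        ∏ j ∈ Finset.range m, (k + j) with hw_def
    have hwnn : ∀ m, 0 ≤ w m := by
      intro m
      have h1 : (0:ℝ) ≤ ∏ j ∈ Finset.range m, (k + j) :=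
        Finset.prod_nonneg fun j _ => by positivity
      have h2 : (0:ℝ) ≤ (1 - q) ^ k := Real.rpow_nonneg (by linarith) _
      positivity
    set f : ℝ → ℝ := fun x => ∏ j ∈ Finset.range n, (x - j * d) with hf_def
    -- values of f on the lattice
    have hfm : ∀ m : ℕ, f (d * m) = d ^ n * ∏ j ∈ Finset.range n, ((m:ℝ) - j) := by
      intro m
      simp only [hf_def]
      have h0 : ∀ j ∈ Finset.range n, (d * (m:ℝ) - j * d) = d * ((m:ℝ) - j) := by
        intro j _; ring
      rw [Finset.prod_congr rfl h0, Finset.prod_mul_distrib, Finset.prod_const,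
        Finset.card_range]
    have hfzero : ∀ m : ℕ, m < n → f (d * m) = 0 := by
      intro m hm
      rw [hfm m]
      have : ((m:ℝ) - (m:ℕ)) = 0 := by simp
      rw [Finset.prod_eq_zero (Finset.mem_range.mpr hm) this, mul_zero]
    have hfval : ∀ l : ℕ, f (d * (l + n : ℕ)) =
        d ^ n * ((l + n).factorial / l.factorial : ℝ) := by
      intro l
      rw [hfm (l + n), ← prod_desc n l]
      congr 1
      refine Finset.prod_congr rfl fun j _ => ?_
      push_cast; ring
    have hfnn : ∀ m : ℕ, 0 ≤ f (d * m) := by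
      intro m
      rcases lt_or_ge m n with hm | hm
      · rw [hfzero m hm]
      · obtain ⟨l, rfl⟩ : ∃ l, m = l + n := ⟨m - n, (Nat.sub_add_cancel hm).symm⟩
        rw [hfval l]
        positivity
    -- the key HasSum
    set P : ℝ := ∏ j ∈ Finset.range n, (k + j) with hP_def
    have hPnn : 0 ≤ P := Finset.prod_nonneg fun j _ => by positivity
    have hkey : HasSum (fun m : ℕ => w m * f (d * m)) (β ^ n * P) := by
      have hshift : ∀ l : ℕ, w (l + n) * f (d * (l + n : ℕ)) =
          ((1 - q) ^ k * d ^ n * q ^ n * P) *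
            (q ^ l / l.factorial * ∏ j ∈ Finset.range l, ((k + n) + j)) := by
        intro l
        rw [hfval l]
        simp only [hw_def]
        have hsplit : ∏ j ∈ Finset.range (l + n), (k + j)
            = (∏ j ∈ Finset.range n, (k + j)) * ∏ j ∈ Finset.range l, ((k + n) + j) := by
          rw [add_comm l n, Finset.prod_range_add]
          congr 1
          refine Finset.prod_congr rfl fun j _ => ?_
          push_cast; ring
        rw [hsplit]
        have hfac : ((l + n).factorial : ℝ) ≠ 0 := Nat.cast_ne_zero.mpr (Nat.factorial_ne_zero _)
        have hfac2 : ((l.factorial : ℝ)) ≠ 0 := Nat.cast_ne_zero.mpr (Nat.factorial_ne_zero _)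
        rw [hP_def]
        field_simp
        ring
      have h1q : (0:ℝ) < 1 - q := by linarith
      have hsum2 : HasSum (fun l : ℕ => w (l + n) * f (d * (l + n : ℕ)))
          (((1 - q) ^ k * d ^ n * q ^ n * P) * (1 - q) ^ (-(k + (n:ℝ)))) := by
        have h2 := (key_hasSum (by positivity : (0:ℝ) < k + (n:ℝ)) hq0.le hq1).mul_left
          ((1 - q) ^ k * d ^ n * q ^ n * P)
        rw [show (fun l : ℕ => w (l + n) * f (d * (l + n : ℕ)))
          = fun l : ℕ => ((1 - q) ^ k * d ^ n * q ^ n * P) *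
            (q ^ l / l.factorial * ∏ j ∈ Finset.range l, ((k + (n:ℝ)) + j)) from
          funext hshift]
        exact h2
      have hconst : ((1 - q) ^ k * d ^ n * q ^ n * P) * (1 - q) ^ (-(k + (n:ℝ)))
          = β ^ n * P := by
        have e1 : (1 - q) ^ k * (1 - q) ^ (-(k + (n:ℝ))) = ((1 - q) ^ (n:ℕ))⁻¹ := by
          rw [← Real.rpow_add h1q, ← Real.rpow_natCast (1 - q) n, ← Real.rpow_neg h1q.le]
          congr 1
          ring
        have e2 : d ^ n * q ^ n * ((1 - q) ^ (n:ℕ))⁻¹ = β ^ n := by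
          rw [← mul_pow, ← inv_pow, ← mul_pow]
          congr 1
          rw [hd_def, hq_def]
          field_simp
        calc ((1 - q) ^ k * d ^ n * q ^ n * P) * (1 - q) ^ (-(k + (n:ℝ)))
            = ((1 - q) ^ k * (1 - q) ^ (-(k + (n:ℝ)))) * (d ^ n * q ^ n) * P := by ring
          _ = β ^ n * P := by rw [e1]; rw [show ((1-q)^(n:ℕ))⁻¹ * (d^n * q^n) = d^n * q^n * ((1-q)^(n:ℕ))⁻¹ from by ring, e2]
      rw [hconst] at hsum2
      have h4 := (hasSum_nat_add_iff (f := fun m : ℕ => w m * f (d * m)) n).mp hsum2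
      rw [Finset.sum_eq_zero (fun i hi => by
        rw [hfzero i (Finset.mem_range.mp hi), mul_zero]), add_zero] at h4
      exact h4
    -- now the integral
    have hμ : muM α β σ = Measure.sum (fun m : ℕ => ENNReal.ofReal (w m) •
        Measure.dirac (d * m)) := by
      rw [muM, if_neg hab]
    have hcont : Continuous f := by
      simp only [hf_def]
      exact continuous_finset_prod _ fun j _ => continuous_id.sub continuous_const
    have hInt : Integrable f (Measure.sum fun m : ℕ => ENNReal.ofReal (w m) •
        Measure.dirac (d * m)) := by
      refine ⟨hcont.aestronglyMeasurable, ?_⟩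
      show (∫⁻ a, (‖f a‖₊ : ℝ≥0∞)
        ∂(Measure.sum fun m : ℕ => ENNReal.ofReal (w m) • Measure.dirac (d * m))) < ⊤
      rw [lintegral_sum_measure]
      simp_rw [lintegral_smul_measure, lintegral_dirac]
      have he : ∀ m : ℕ, (‖f (d * m)‖₊ : ℝ≥0∞) = ENNReal.ofReal (f (d * m)) := fun m => by
        rw [← enorm_eq_nnnorm, ← ofReal_norm, Real.norm_of_nonneg (hfnn m)]
      calc ∑' m : ℕ, ENNReal.ofReal (w m) * ‖f (d * m)‖₊
          = ∑' m : ℕ, ENNReal.ofReal (w m * f (d * m)) := by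
            refine tsum_congr fun m => ?_
            rw [he m, ← ENNReal.ofReal_mul (hwnn m)]
        _ = ENNReal.ofReal (β ^ n * P) := by
            rw [← ENNReal.ofReal_tsum_of_nonneg (fun m => mul_nonneg (hwnn m) (hfnn m))
              hkey.summable, hkey.tsum_eq]
        _ < ⊤ := ENNReal.ofReal_lt_top
    rw [hμ, integral_sum_measure hInt]
    have hterm : ∀ m : ℕ, (∫ x, f x ∂(ENNReal.ofReal (w m) • Measure.dirac (d * m)))
        = w m * f (d * m) := by
      intro m
      rw [integral_smul_measure, integral_dirac, ENNReal.toReal_ofReal (hwnn m), smul_eq_mul]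
    rw [tsum_congr hterm, hkey.tsum_eq]
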